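/- For n ≥ 2 and any two strictly interlaced real sequences λ₁ < λ₁° < λ₂ < ⋯ < λ_{n−1}° < λ_n, there exists a unique real symmetric tridiagonal matrix B with strictly negative off-diagonal entries such that B has eigenvalues (λ_i)₁ⁿ and its leading principal submatrix B° has eigenvalues (λ_i°)₁^{n−1}. -/

import Mathlib

open Polynomial Finset

lemma prod_neg_of_single {N : ℕ} (g : Fin N → ℝ) (k : Fin N) (hk : g k < 0)
    (h : ∀ j, j ≠ k → 0 < g j) : ∏ j, g j < 0 := by
  rw [← Finset.mul_prod_erase Finset.univ g (Finset.mem_univ k)]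
  exact mul_neg_of_neg_of_pos hk (Finset.prod_pos fun j hj => h j (Finset.ne_of_mem_erase hj))

lemma monic_prodXC {N : ℕ} (f : Fin N → ℝ) : (∏ i, (X - C (f i))).Monic :=
  monic_prod_of_monic _ _ fun i _ => monic_X_sub_C _

lemma natDegree_prodXC {N : ℕ} (f : Fin N → ℝ) : (∏ i, (X - C (f i))).natDegree = N := by
  rw [natDegree_prod_of_monic _ _ fun i _ => monic_X_sub_C _]
  simp

lemma coeff_top_prodXC {N : ℕ} (f : Fin N → ℝ) : (∏ i, (X - C (f i))).coeff N = 1 := by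
  have := (monic_prodXC f).coeff_natDegree
  rwa [natDegree_prodXC] at this

lemma coeff_next_prodXC {N : ℕ} (f : Fin (N+1) → ℝ) :
    (∏ i, (X - C (f i))).coeff N = -∑ i, f i := by
  have h1 := prod_X_sub_C_nextCoeff (s := (Finset.univ : Finset (Fin (N+1)))) f
  rw [nextCoeff_of_natDegree_pos (by rw [natDegree_prodXC]; omega)] at h1
  rwa [natDegree_prodXC] at h1

lemma coeff_hi_prodXC {N : ℕ} (f : Fin N → ℝ) {m : ℕ} (hm : N < m) :
    (∏ i, (X - C (f i))).coeff m = 0 :=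
  coeff_eq_zero_of_natDegree_lt (by rwa [natDegree_prodXC])

lemma spectral {n : ℕ} (lam : Fin (n+2) → ℝ) (lamo : Fin (n+1) → ℝ)
    (h : ∀ i : Fin (n+1), lam i.castSucc < lamo i ∧ lamo i < lam i.succ) :
    ∃ (a b2 : ℝ) (nu : Fin n → ℝ), 0 < b2 ∧
      (∀ i : Fin n, lamo i.castSucc < nu i ∧ nu i < lamo i.succ) ∧
      (∏ i, (X - C (lam i))) =
        (X - C a) * (∏ i, (X - C (lamo i))) - C b2 * ∏ i, (X - C (nu i)) := by
  have hlm : StrictMono lam := Fin.strictMono_iff_lt_succ.2 fun i => (h i).1.trans (h i).2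
  have hlo : StrictMono lamo := Fin.strictMono_iff_lt_succ.2 fun i => by
    refine (h i.castSucc).2.trans ?_
    rw [Fin.succ_castSucc]
    exact (h i.succ).1
  set p : ℝ[X] := ∏ i, (X - C (lam i)) with hp
  set q : ℝ[X] := ∏ i, (X - C (lamo i)) with hq
  set a : ℝ := (∑ i, lam i) - ∑ i, lamo i with ha
  set r : ℝ[X] := (X - C a) * q - p with hr
  have hlt1 : ∀ (j : Fin (n+2)) (i : Fin (n+1)), (j : ℕ) ≤ (i : ℕ) → lam j < lamo i := by
    intro j i hj
    exact lt_of_le_of_lt (hlm.monotone (show j ≤ i.castSucc by rw [Fin.le_def]; simpa using hj))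
      (h i).1
  have hlt2 : ∀ (i : Fin (n+1)) (j : Fin (n+2)), (i : ℕ) < (j : ℕ) → lamo i < lam j := by
    intro i j hj
    exact lt_of_lt_of_le (h i).2 (hlm.monotone (show i.succ ≤ j by rw [Fin.le_def]; simpa using hj))
  have heval : ∀ x : ℝ, eval x p = ∏ j, (x - lam j) := by
    intro x; rw [hp, eval_prod]; simp
  have hpp : ∀ i : Fin n, eval (lamo i.castSucc) p * eval (lamo i.succ) p < 0 := by
    intro i
    rw [heval, heval, ← Finset.prod_mul_distrib]
    apply prod_neg_of_single _ (⟨(i : ℕ) + 1, by omega⟩ : Fin (n+2))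
    · apply mul_neg_of_neg_of_pos
      · have := hlt2 i.castSucc ⟨(i : ℕ) + 1, by omega⟩ (by simp)
        linarith
      · have := hlt1 ⟨(i : ℕ) + 1, by omega⟩ i.succ (by simp)
        linarith
    · intro j hj
      have hj' : (j : ℕ) ≤ (i : ℕ) ∨ (i : ℕ) + 1 < (j : ℕ) := by
        rcases Nat.lt_trichotomy (j : ℕ) ((i : ℕ) + 1) with h1 | h1 | h1
        · omega
        · exact absurd (Fin.ext h1) hj
        · omega
      rcases hj' with h1 | h1
      · have a1 := hlt1 j i.castSucc (by simpa using h1)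
        have a2 := hlt1 j i.succ (by simp; omega)
        nlinarith
      · have a1 := hlt2 i.castSucc j (by simp; omega)
        have a2 := hlt2 i.succ j (by simp; omega)
        nlinarith
  have hplast : eval (lamo (Fin.last n)) p < 0 := by
    rw [heval]
    apply prod_neg_of_single _ (Fin.last (n+1))
    · have := hlt2 (Fin.last n) (Fin.last (n+1)) (by simp)
      linarith
    · intro j hj
      have : (j : ℕ) ≤ n := by
        have := j.isLt
        have : (j : ℕ) ≠ n + 1 := fun hc => hj (Fin.ext (by simpa using hc))
        omega
      have := hlt1 j (Fin.last n) (by simpa using this)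
      linarith
  have hq0 : ∀ i : Fin (n+1), eval (lamo i) q = 0 := by
    intro i
    rw [hq, eval_prod]
    exact Finset.prod_eq_zero (Finset.mem_univ i) (by simp)
  have hrev : ∀ i : Fin (n+1), eval (lamo i) r = -eval (lamo i) p := by
    intro i; rw [hr]; simp [hq0 i]
  have hrlast : 0 < eval (lamo (Fin.last n)) r := by
    rw [hrev]; linarith
  -- roots of r in each interval
  have hnuex : ∀ i : Fin n, ∃ x, lamo i.castSucc < x ∧ x < lamo i.succ ∧ eval x r = 0 := by
    intro i
    have hab : lamo i.castSucc < lamo i.succ := hlo Fin.castSucc_lt_succ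
    have hprod : eval (lamo i.castSucc) r * eval (lamo i.succ) r < 0 := by
      rw [hrev, hrev]; have := hpp i; nlinarith
    have hcont : ContinuousOn (fun x => eval x r) (Set.Icc (lamo i.castSucc) (lamo i.succ)) :=
      r.continuous.continuousOn
    rcases lt_or_ge (eval (lamo i.castSucc) r) 0 with h1 | h1
    · have h2 : 0 < eval (lamo i.succ) r := by nlinarith
      have := intermediate_value_Ioo hab.le hcont (Set.mem_Ioo.2 ⟨h1, h2⟩)
      obtain ⟨x, hx, hfx⟩ := this
      exact ⟨x, hx.1, hx.2, hfx⟩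
    · have h1' : 0 < eval (lamo i.castSucc) r := by
        rcases h1.lt_or_eq with h2 | h2
        · exact h2
        · exfalso; rw [← h2] at hprod; simp at hprod
      have h2 : eval (lamo i.succ) r < 0 := by nlinarith
      have := intermediate_value_Ioo' hab.le hcont (Set.mem_Ioo.2 ⟨h2, h1'⟩)
      obtain ⟨x, hx, hfx⟩ := this
      exact ⟨x, hx.1, hx.2, hfx⟩
  choose nu hnu1 hnu2 hnu3 using hnuex
  have hnum : StrictMono nu := by
    intro i j hij
    calc nu i < lamo i.succ := hnu2 i
    _ ≤ lamo j.castSucc := hlo.monotone (by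
          rw [Fin.le_def]; rw [Fin.lt_def] at hij
          simp only [Fin.val_succ, Fin.coe_castSucc]; omega)
    _ < nu j := hnu1 j
  have hr0 : r ≠ 0 := fun hc => by rw [hc] at hrlast; simp at hrlast
  -- degree bound
  have hdeg : r.degree < ((n+1 : ℕ) : WithBot ℕ) := by
    rw [degree_lt_iff_coeff_zero]
    intro m hm
    obtain ⟨k, rfl⟩ : ∃ k, m = k + 1 := ⟨m - 1, by omega⟩
    have hcoeff : r.coeff (k+1) = q.coeff k - a * q.coeff (k+1) - p.coeff (k+1) := by
      rw [hr, sub_mul, coeff_sub, coeff_sub, coeff_X_mul, coeff_C_mul]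
    rcases Nat.lt_trichotomy k (n+1) with h1 | h1 | h1
    · have hk : k = n := by omega
      subst hk
      rw [hcoeff, coeff_next_prodXC, coeff_top_prodXC, coeff_next_prodXC, ha]
      ring
    · subst h1
      rw [hcoeff, coeff_top_prodXC, coeff_hi_prodXC _ (by omega), coeff_top_prodXC]
      ring
    · rw [hcoeff, coeff_hi_prodXC _ (by omega), coeff_hi_prodXC _ (by omega),
        coeff_hi_prodXC _ (by omega)]
      ring
  have hndeg : r.natDegree ≤ n := by
    have := (natDegree_lt_iff_degree_lt hr0).2 hdeg
    omega
  -- divisibility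
  have hdvd : (∏ i, (X - C (nu i))) ∣ r := by
    have hsub : (Finset.univ.val.map nu : Multiset ℝ) ≤ r.roots := by
      rw [Multiset.le_iff_subset (Multiset.Nodup.map hnum.injective Finset.univ.nodup)]
      intro x hx
      obtain ⟨i, _, rfl⟩ := Multiset.mem_map.1 hx
      rw [mem_roots']
      exact ⟨hr0, hnu3 i⟩
    have h2 := (Multiset.prod_dvd_prod_of_le (Multiset.map_le_map hsub)).trans
      r.prod_multiset_X_sub_C_dvd
    rw [Multiset.map_map] at h2
    exact h2
  obtain ⟨s, hs⟩ := hdvd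
  have hs0 : s ≠ 0 := fun hc => hr0 (by rw [hs, hc, mul_zero])
  have hsdeg : s.natDegree = 0 := by
    have := natDegree_mul (monic_prodXC nu).ne_zero hs0
    rw [← hs, natDegree_prodXC] at this
    omega
  obtain ⟨c, rfl⟩ := natDegree_eq_zero.1 hsdeg
  have hcpos : 0 < c := by
    have h1 : eval (lamo (Fin.last n)) r = (∏ i, (lamo (Fin.last n) - nu i)) * c := by
      rw [hs, eval_mul, eval_C, eval_prod]; simp
    have h2 : 0 < ∏ i, (lamo (Fin.last n) - nu i) := by
      apply Finset.prod_pos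
      intro i _
      have := (hnu2 i).trans_le (hlo.monotone (Fin.le_last i.succ))
      linarith
    nlinarith [hrlast]
  refine ⟨a, c, nu, hcpos, fun i => ⟨hnu1 i, hnu2 i⟩, ?_⟩
  have : p = (X - C a) * q - r := by rw [hr]; ring
  rw [this, hs]
  ring

lemma det_expand {R : Type*} [CommRing R] {n : ℕ} (M : Matrix (Fin (n+2)) (Fin (n+2)) R)
    (hrow : ∀ j : Fin (n+2), (j:ℕ) < n → M (Fin.last (n+1)) j = 0)
    (hcol : ∀ i : Fin (n+2), (i:ℕ) < n → M i (Fin.last (n+1)) = 0) :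
    M.det = M (Fin.last (n+1)) (Fin.last (n+1)) * (M.submatrix Fin.castSucc Fin.castSucc).det
      - M (Fin.last (n+1)) (Fin.last n).castSucc * M (Fin.last n).castSucc (Fin.last (n+1)) *
        (M.submatrix (fun i : Fin n => i.castSucc.castSucc)
          (fun j : Fin n => j.castSucc.castSucc)).det := by
  set N : Matrix (Fin (n+1)) (Fin (n+1)) R :=
    M.submatrix Fin.castSucc ((Fin.last n).castSucc).succAbove with hN
  have hNlast : ∀ i : Fin (n+1),
      N i (Fin.last n) = M (Fin.castSucc i) (Fin.last (n+1)) := by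
    intro i
    rw [hN, Matrix.submatrix_apply,
      Fin.succAbove_of_le_castSucc _ _ (le_refl _), Fin.succ_last]
  have hNsub : N.submatrix Fin.castSucc Fin.castSucc =
      M.submatrix (fun i : Fin n => i.castSucc.castSucc)
        (fun j : Fin n => j.castSucc.castSucc) := by
    ext i j
    rw [Matrix.submatrix_apply, hN, Matrix.submatrix_apply, Matrix.submatrix_apply,
      Fin.succAbove_of_castSucc_lt _ _ (by rw [Fin.lt_def]; simp)]
  have hdetN : N.det = M ((Fin.last n).castSucc) (Fin.last (n+1)) *
      (M.submatrix (fun i : Fin n => i.castSucc.castSucc)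
        (fun j : Fin n => j.castSucc.castSucc)).det := by
    rw [Matrix.det_succ_column N (Fin.last n)]
    rw [Finset.sum_eq_single_of_mem (Fin.last n) (Finset.mem_univ _)
      (by
        intro i _ hi
        have hiv : (i : ℕ) < n := by
          have : (i : ℕ) ≠ n := fun hh => hi (Fin.ext (by simpa using hh))
          have := i.isLt; omega
        rw [hNlast, hcol _ (by simpa using hiv), mul_zero, zero_mul])]
    have e3 : ((-1 : R)) ^ ((Fin.last n : ℕ) + (Fin.last n : ℕ)) = 1 := by
      simp only [Fin.val_last]
      exact Even.neg_one_pow ⟨n, by ring⟩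
    rw [e3, one_mul, hNlast, Fin.succAbove_last, hNsub]
  rw [Matrix.det_succ_row M (Fin.last (n+1))]
  rw [Finset.sum_eq_add_of_mem ((Fin.last n).castSucc) (Fin.last (n+1))
    (Finset.mem_univ _) (Finset.mem_univ _)
    (by simp [Fin.ext_iff])
    (by
      intro c _ hc
      have hcv : (c : ℕ) < n := by
        have h1 : (c : ℕ) ≠ n := fun hh => hc.1 (Fin.ext (by simpa using hh))
        have h2 : (c : ℕ) ≠ n + 1 := fun hh => hc.2 (Fin.ext (by simpa using hh))
        have := c.isLt; omega
      rw [hrow c hcv, mul_zero, zero_mul])]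
  have e1 : ((-1 : R)) ^ ((Fin.last (n+1) : ℕ) + (((Fin.last n).castSucc : Fin (n+2)) : ℕ)) = -1 := by
    simp only [Fin.val_last, Fin.coe_castSucc]
    exact Odd.neg_one_pow ⟨n, by ring⟩
  have e2 : ((-1 : R)) ^ ((Fin.last (n+1) : ℕ) + ((Fin.last (n+1) : Fin (n+2)) : ℕ)) = 1 := by
    simp only [Fin.val_last]
    exact Even.neg_one_pow ⟨n + 1, by ring⟩
  rw [e1, e2, Fin.succAbove_last, hdetN]
  ring

lemma charmatrix_sub {R : Type*} [CommRing R] {k l : ℕ} (M : Matrix (Fin l) (Fin l) R)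
    (f : Fin k → Fin l) (hf : Function.Injective f) :
    Matrix.charmatrix (M.submatrix f f) = (Matrix.charmatrix M).submatrix f f := by
  refine Matrix.ext fun i j => ?_
  by_cases h : i = j
  · subst h
    simp [Matrix.charmatrix_apply_eq]
  · rw [Matrix.charmatrix_apply_ne _ _ _ h, Matrix.submatrix_apply, Matrix.submatrix_apply,
      Matrix.charmatrix_apply_ne _ _ _ (fun hc => h (hf hc))]

lemma charpoly_expand {n : ℕ} (B : Matrix (Fin (n+2)) (Fin (n+2)) ℝ)
    (hrow : ∀ j : Fin (n+2), (j:ℕ) < n → B (Fin.last (n+1)) j = 0)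
    (hcol : ∀ i : Fin (n+2), (i:ℕ) < n → B i (Fin.last (n+1)) = 0) :
    B.charpoly = (X - C (B (Fin.last (n+1)) (Fin.last (n+1)))) *
        (B.submatrix Fin.castSucc Fin.castSucc).charpoly
      - C (B (Fin.last (n+1)) (Fin.last n).castSucc * B (Fin.last n).castSucc (Fin.last (n+1))) *
        (B.submatrix (fun i : Fin n => i.castSucc.castSucc)
          (fun j : Fin n => j.castSucc.castSucc)).charpoly := by
  have hne1 : (Fin.last (n+1) : Fin (n+2)) ≠ (Fin.last n).castSucc := by
    simp [Fin.ext_iff]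
  have hrow' : ∀ j : Fin (n+2), (j:ℕ) < n → Matrix.charmatrix B (Fin.last (n+1)) j = 0 := by
    intro j hj
    rw [Matrix.charmatrix_apply_ne _ _ _ (by simp [Fin.ext_iff]; omega), hrow j hj, map_zero,
      neg_zero]
  have hcol' : ∀ i : Fin (n+2), (i:ℕ) < n → Matrix.charmatrix B i (Fin.last (n+1)) = 0 := by
    intro i hi
    rw [Matrix.charmatrix_apply_ne _ _ _ (by simp [Fin.ext_iff]; omega), hcol i hi, map_zero,
      neg_zero]
  rw [Matrix.charpoly, det_expand _ hrow' hcol', Matrix.charmatrix_apply_eq,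
    Matrix.charmatrix_apply_ne _ _ _ hne1, Matrix.charmatrix_apply_ne _ _ _ hne1.symm,
    ← charmatrix_sub _ _ (Fin.castSucc_injective _),
    ← charmatrix_sub _ _ (fun a b hab => by
      have : (a : ℕ) = (b : ℕ) := by simpa [Fin.ext_iff] using hab
      exact Fin.ext this)]
  rw [Matrix.charpoly, Matrix.charpoly, map_mul]
  ring

def border {n : ℕ} (B' : Matrix (Fin (n+1)) (Fin (n+1)) ℝ) (a b : ℝ) :
    Matrix (Fin (n+2)) (Fin (n+2)) ℝ :=
  Matrix.of fun i j =>
    if hij : (i:ℕ) < n+1 ∧ (j:ℕ) < n+1 then B' ⟨i, hij.1⟩ ⟨j, hij.2⟩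
    else if ((i:ℕ) = n ∧ (j:ℕ) = n+1) ∨ ((i:ℕ) = n+1 ∧ (j:ℕ) = n) then b
    else if (i:ℕ) = n+1 ∧ (j:ℕ) = n+1 then a else 0

lemma border_lt {n : ℕ} (B' : Matrix (Fin (n+1)) (Fin (n+1)) ℝ) (a b : ℝ)
    {i j : Fin (n+2)} (hi : (i:ℕ) < n+1) (hj : (j:ℕ) < n+1) :
    border B' a b i j = B' ⟨i, hi⟩ ⟨j, hj⟩ := by
  rw [border, Matrix.of_apply, dif_pos ⟨hi, hj⟩]

lemma border_corner {n : ℕ} (B' : Matrix (Fin (n+1)) (Fin (n+1)) ℝ) (a b : ℝ)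
    {i j : Fin (n+2)} (hi : (i:ℕ) = n+1) (hj : (j:ℕ) = n+1) :
    border B' a b i j = a := by
  rw [border, Matrix.of_apply, dif_neg (by omega), if_neg (by omega), if_pos ⟨hi, hj⟩]

lemma border_off1 {n : ℕ} (B' : Matrix (Fin (n+1)) (Fin (n+1)) ℝ) (a b : ℝ)
    {i j : Fin (n+2)} (hi : (i:ℕ) = n) (hj : (j:ℕ) = n+1) :
    border B' a b i j = b := by
  rw [border, Matrix.of_apply, dif_neg (by omega), if_pos (Or.inl ⟨hi, hj⟩)]

lemma border_off2 {n : ℕ} (B' : Matrix (Fin (n+1)) (Fin (n+1)) ℝ) (a b : ℝ)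
    {i j : Fin (n+2)} (hi : (i:ℕ) = n+1) (hj : (j:ℕ) = n) :
    border B' a b i j = b := by
  rw [border, Matrix.of_apply, dif_neg (by omega), if_pos (Or.inr ⟨hi, hj⟩)]

lemma border_zero {n : ℕ} (B' : Matrix (Fin (n+1)) (Fin (n+1)) ℝ) (a b : ℝ)
    {i j : Fin (n+2)} (h : ((i:ℕ) = n+1 ∧ (j:ℕ) < n) ∨ ((j:ℕ) = n+1 ∧ (i:ℕ) < n)) :
    border B' a b i j = 0 := by
  rw [border, Matrix.of_apply, dif_neg (by omega), if_neg (by omega), if_neg (by omega)]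

lemma match_poly {n : ℕ} {q s s' : ℝ[X]} (hs : s.Monic) (hsd : s.natDegree = n)
    (hs' : s'.Monic) (hs'd : s'.natDegree = n) {a a' b b' : ℝ} (hbne : b ≠ 0)
    (hq : q.Monic) (hqd : q.natDegree = n+1)
    (heq : (X - C a) * q - C b * s = (X - C a') * q - C b' * s') :
    a = a' ∧ b = b' ∧ s = s' := by
  have h1 : (C a' - C a) * q = C b * s - C b' * s' := by linear_combination heq
  have hdr : (C b * s - C b' * s').natDegree ≤ n := by
    refine le_trans (natDegree_sub_le _ _) ?_
    simp only [max_le_iff]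
    exact ⟨le_trans (natDegree_C_mul_le _ _) hsd.le, le_trans (natDegree_C_mul_le _ _) hs'd.le⟩
  have haa : a = a' := by
    by_contra hne
    have hC : C a' - C a ≠ 0 := by
      rw [← map_sub, Ne, C_eq_zero, sub_eq_zero]
      exact fun hc => hne hc.symm
    have : ((C a' - C a) * q).natDegree = n + 1 := by
      rw [natDegree_mul hC hq.ne_zero, hqd, natDegree_eq_zero.2 ⟨a' - a, by rw [map_sub]⟩]
      omega
    rw [h1] at this
    omega
  subst haa
  have h2 : C b * s = C b' * s' := by
    rw [sub_self, zero_mul] at h1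
    exact sub_eq_zero.1 h1.symm
  have hb : b = b' := by
    have hco := congrArg (fun p : ℝ[X] => p.coeff n) h2
    simp only [coeff_C_mul] at hco
    rwa [← hsd, hs.coeff_natDegree, hsd, ← hs'd, hs'.coeff_natDegree, mul_one, mul_one] at hco
  subst hb
  exact ⟨rfl, rfl, mul_left_cancel₀ (C_ne_zero.2 hbne) h2⟩

theorem jacobi (n : ℕ) : ∀ (lam : Fin (n+1) → ℝ) (lamo : Fin n → ℝ),
    (∀ i : Fin n, lam i.castSucc < lamo i ∧ lamo i < lam i.succ) →
    ∃! B : Matrix (Fin (n+1)) (Fin (n+1)) ℝ,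
      B.IsSymm ∧
      (∀ i j : Fin (n+1), (i:ℕ)+1 < (j:ℕ) ∨ (j:ℕ)+1 < (i:ℕ) → B i j = 0) ∧
      (∀ i j : Fin (n+1), (i:ℕ)+1 = (j:ℕ) → B i j < 0) ∧
      B.charpoly = ∏ i, (X - C (lam i)) ∧
      (B.submatrix Fin.castSucc Fin.castSucc).charpoly = ∏ i, (X - C (lamo i)) := by
  induction n with
  | zero =>
    intro lam lamo _
    have hcp1 : ∀ y : Matrix (Fin 1) (Fin 1) ℝ, y.charpoly = X - C (y 0 0) := fun y => by
      rw [Matrix.charpoly, Matrix.det_fin_one, Matrix.charmatrix_apply_eq]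
    refine ⟨Matrix.of (fun _ _ => lam 0), ⟨?_, ?_, ?_, ?_, ?_⟩, ?_⟩
    · exact Matrix.ext fun i j => rfl
    · intro i j hij
      exact absurd hij (by have := i.isLt; have := j.isLt; omega)
    · intro i j hij
      exact absurd hij (by have := i.isLt; have := j.isLt; omega)
    · rw [hcp1, Fin.prod_univ_one, Matrix.of_apply]
    · rw [Matrix.charpoly, Matrix.det_fin_zero, Finset.univ_eq_empty, Finset.prod_empty]
    · intro y hy
      obtain ⟨_, _, _, hcp, _⟩ := hy
      rw [hcp1, Fin.prod_univ_one] at hcp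
      have h00 : y 0 0 = lam 0 := C_inj.1 (sub_right_inj.1 hcp)
      refine Matrix.ext fun i j => ?_
      have hi : i = 0 := Fin.fin_one_eq_zero i
      have hj : j = 0 := Fin.fin_one_eq_zero j
      rw [hi, hj, h00, Matrix.of_apply]
  | succ m ih =>
    intro lam lamo hinter
    obtain ⟨a, b2, nu, hb2, hint, hid⟩ := spectral lam lamo hinter
    obtain ⟨B', ⟨hB's, hB'z, hB'n, hB'p, hB'q⟩, hB'u⟩ := ih lamo nu hint
    set b : ℝ := -Real.sqrt b2 with hbdef
    have hbneg : b < 0 := neg_lt_zero.2 (Real.sqrt_pos.2 hb2)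
    have hbb : b * b = b2 := by rw [hbdef, neg_mul_neg, Real.mul_self_sqrt hb2.le]
    have hsub1 : (border B' a b).submatrix Fin.castSucc Fin.castSucc = B' := by
      refine Matrix.ext fun i j => ?_
      rw [Matrix.submatrix_apply, border_lt _ _ _ (by simp; have := i.isLt; omega) (by simp; have := j.isLt; omega)]
      congr 1 <;> exact Fin.ext (by simp)
    have hsub2 : (border B' a b).submatrix (fun i : Fin m => i.castSucc.castSucc)
        (fun j : Fin m => j.castSucc.castSucc) = B'.submatrix Fin.castSucc Fin.castSucc := by
      refine Matrix.ext fun i j => ?_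
      rw [Matrix.submatrix_apply, Matrix.submatrix_apply,
        border_lt _ _ _ (by simp) (by simp)]
      congr 1 <;> exact Fin.ext (by simp)
    have hexp := charpoly_expand (border B' a b)
      (fun j hj => border_zero _ _ _ (Or.inl ⟨by simp, hj⟩))
      (fun i hi => border_zero _ _ _ (Or.inr ⟨by simp, hi⟩))
    rw [hsub1, hsub2, border_corner _ _ _ (by simp) (by simp),
      border_off2 _ _ _ (by simp) (by simp), border_off1 _ _ _ (by simp) (by simp),
      hB'p, hB'q, hbb] at hexp
    refine ⟨border B' a b, ⟨?_, ?_, ?_, ?_, ?_⟩, ?_⟩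
    · -- symmetric
      refine Matrix.ext fun i j => ?_
      rw [Matrix.transpose_apply]
      by_cases hi : (i:ℕ) < m+1 <;> by_cases hj : (j:ℕ) < m+1
      · rw [border_lt _ _ _ hi hj, border_lt _ _ _ hj hi]
        exact hB's.apply _ _
      · have hjv : (j:ℕ) = m+1 := by have := j.isLt; omega
        by_cases him : (i:ℕ) = m
        · rw [border_off1 _ _ _ him hjv, border_off2 _ _ _ hjv him]
        · rw [border_zero _ _ _ (Or.inr ⟨hjv, by omega⟩),
            border_zero _ _ _ (Or.inl ⟨hjv, by omega⟩)]
      · have hiv : (i:ℕ) = m+1 := by have := i.isLt; omega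
        by_cases hjm : (j:ℕ) = m
        · rw [border_off1 _ _ _ hjm hiv, border_off2 _ _ _ hiv hjm]
        · rw [border_zero _ _ _ (Or.inl ⟨hiv, by omega⟩),
            border_zero _ _ _ (Or.inr ⟨hiv, by omega⟩)]
      · have hiv : (i:ℕ) = m+1 := by have := i.isLt; omega
        have hjv : (j:ℕ) = m+1 := by have := j.isLt; omega
        rw [border_corner _ _ _ hiv hjv, border_corner _ _ _ hjv hiv]
    · -- far off-diagonal zero
      intro i j hij
      by_cases hi : (i:ℕ) < m+1 <;> by_cases hj : (j:ℕ) < m+1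
      · rw [border_lt _ _ _ hi hj]
        exact hB'z _ _ (by simpa using hij)
      · have hjv : (j:ℕ) = m+1 := by have := j.isLt; omega
        exact border_zero _ _ _ (Or.inr ⟨hjv, by omega⟩)
      · have hiv : (i:ℕ) = m+1 := by have := i.isLt; omega
        exact border_zero _ _ _ (Or.inl ⟨hiv, by omega⟩)
      · exfalso; have := i.isLt; have := j.isLt; omega
    · -- subdiagonal negative
      intro i j hij
      by_cases hj : (j:ℕ) < m+1
      · rw [border_lt _ _ _ (by omega) hj]
        exact hB'n _ _ (by simpa using hij)
      · have hjv : (j:ℕ) = m+1 := by have := j.isLt; omega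
        rw [border_off1 _ _ _ (by omega) hjv]
        exact hbneg
    · rw [hexp]
      exact hid.symm
    · rw [hsub1]
      exact hB'p
    · -- uniqueness
      intro y hy
      obtain ⟨hys, hyz, hyn, hyp, hyq⟩ := hy
      have hyexp := charpoly_expand y
        (fun j hj => hyz _ j (Or.inr (by simp; omega)))
        (fun i hi => hyz i _ (Or.inl (by simp; omega)))
      have hyL : y ((Fin.last m).castSucc) (Fin.last (m+1)) < 0 := hyn _ _ (by simp)
      have hsymLc : y (Fin.last (m+1)) ((Fin.last m).castSucc)
          = y ((Fin.last m).castSucc) (Fin.last (m+1)) := hys.apply _ _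
      -- identify submatrices of y
      have hysub : (y.submatrix Fin.castSucc Fin.castSucc).submatrix Fin.castSucc Fin.castSucc
          = y.submatrix (fun i : Fin m => i.castSucc.castSucc)
            (fun j : Fin m => j.castSucc.castSucc) := by
        refine Matrix.ext fun i j => ?_
        rw [Matrix.submatrix_apply, Matrix.submatrix_apply, Matrix.submatrix_apply]
      rw [hyp, hyq] at hyexp
      -- match polynomials
      have hmatch := match_poly (monic_prodXC nu) (natDegree_prodXC nu)
        (Matrix.charpoly_monic _)
        (by rw [Matrix.charpoly_natDegree_eq_dim]; simp)
        (ne_of_gt hb2)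
        (monic_prodXC lamo) (natDegree_prodXC lamo)
        (hid.symm.trans hyexp)
      obtain ⟨haa, hbb2, hss⟩ := hmatch
      -- the leading principal submatrix of y equals B'
      have hy' : y.submatrix Fin.castSucc Fin.castSucc = B' := by
        apply hB'u
        refine ⟨hys.submatrix _, ?_, ?_, hyq, ?_⟩
        · intro i j hij
          rw [Matrix.submatrix_apply]
          exact hyz _ _ (by simpa using hij)
        · intro i j hij
          rw [Matrix.submatrix_apply]
          exact hyn _ _ (by simpa using hij)
        · rw [hysub]
          exact hss.symm
      -- conclude y = border B' a b
      have hcorner : y ((Fin.last m).castSucc) (Fin.last (m+1)) = b := by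
        have hsq : y ((Fin.last m).castSucc) (Fin.last (m+1)) *
            y ((Fin.last m).castSucc) (Fin.last (m+1)) = b * b := by
          rw [hbb, hbb2, hsymLc]
        rcases mul_self_eq_mul_self_iff.1 hsq with hc | hc
        · exact hc
        · exfalso
          rw [hc] at hyL
          linarith
      refine Matrix.ext fun i j => ?_
      by_cases hi : (i:ℕ) < m+1 <;> by_cases hj : (j:ℕ) < m+1
      · rw [border_lt _ _ _ hi hj, ← hy', Matrix.submatrix_apply]
        congr 1 <;> exact Fin.ext (by simp)
      · have hjv : (j:ℕ) = m+1 := by have := j.isLt; omega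
        by_cases him : (i:ℕ) = m
        · rw [border_off1 _ _ _ him hjv]
          have hieq : i = (Fin.last m).castSucc := Fin.ext (by simp [him])
          have hjeq : j = Fin.last (m+1) := Fin.ext (by simp [hjv])
          rw [hieq, hjeq, hcorner]
        · rw [border_zero _ _ _ (Or.inr ⟨hjv, by omega⟩)]
          exact hyz i j (Or.inl (by omega))
      · have hiv : (i:ℕ) = m+1 := by have := i.isLt; omega
        by_cases hjm : (j:ℕ) = m
        · rw [border_off2 _ _ _ hiv hjm]
          have hieq : i = Fin.last (m+1) := Fin.ext (by simp [hiv])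
          have hjeq : j = (Fin.last m).castSucc := Fin.ext (by simp [hjm])
          rw [hieq, hjeq, hsymLc, hcorner]
        · rw [border_zero _ _ _ (Or.inl ⟨hiv, by omega⟩)]
          exact hyz i j (Or.inr (by omega))
      · have hiv : (i:ℕ) = m+1 := by have := i.isLt; omega
        have hjv : (j:ℕ) = m+1 := by have := j.isLt; omega
        rw [border_corner _ _ _ hiv hjv]
        have hieq : i = Fin.last (m+1) := Fin.ext (by simp [hiv])
        have hjeq : j = Fin.last (m+1) := Fin.ext (by simp [hjv])
        rw [hieq, hjeq, ← haa]

theorem stmt_19 (n : ℕ) (hn : 2 ≤ n) (lam : Fin n → ℝ) (lamo : Fin (n - 1) → ℝ)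
    (hinter : ∀ i : Fin (n - 1),
      lam ⟨i, by have := i.isLt; omega⟩ < lamo i ∧
      lamo i < lam ⟨(i : ℕ) + 1, by have := i.isLt; omega⟩) :
    ∃! B : Matrix (Fin n) (Fin n) ℝ,
      B.IsSymm ∧
      (∀ i j : Fin n, (i : ℕ) + 1 < (j : ℕ) ∨ (j : ℕ) + 1 < (i : ℕ) → B i j = 0) ∧
      (∀ i j : Fin n, (i : ℕ) + 1 = (j : ℕ) → B i j < 0) ∧
      Matrix.charpoly B = ∏ i : Fin n, (X - C (lam i)) ∧
      Matrix.charpoly (B.submatrix (Fin.castLE (Nat.sub_le n 1)) (Fin.castLE (Nat.sub_le n 1)))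
        = ∏ i : Fin (n - 1), (X - C (lamo i)) := by
  obtain ⟨m, rfl⟩ : ∃ m, n = m + 1 := ⟨n - 1, by omega⟩
  exact jacobi m lam lamo hinter
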